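/- Let S be a topological space, H a Stonean vector sublattice of continuous functions on S, X' : Ω' → S with closed range, and μ a nonnegative finitely additive measure structure on Ω' such that X' is μ-tight. If (h_n) is a sequence in H decreasing pointwise to 0 on X'[Ω'], then lim_n ∫ h_n(X') dμ = 0. -/

import Mathlib

open scoped ENNReal
open MeasureTheory Filter

namespace FA

variable {Ω : Type*}

/-- Outer measure induced by a finitely additive set function on a ring. -/
noncomputable def outer (𝒜 : Set (Set Ω)) (l : Set Ω → ℝ) (E : Set Ω) : ℝ≥0∞ :=
  ⨅ (A : Set Ω) (_ : A ∈ 𝒜) (_ : E ⊆ A), ENNReal.ofReal (l A)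

/-- Inner measure induced by a finitely additive set function on a ring. -/
noncomputable def inner (𝒜 : Set (Set Ω)) (l : Set Ω → ℝ) (E : Set Ω) : ℝ≥0∞ :=
  ⨆ (B : Set Ω) (_ : B ∈ 𝒜) (_ : B ⊆ E), ENNReal.ofReal (l B)

/-- `f` is an `𝒜`-simple function. -/
def IsSimple (𝒜 : Set (Set Ω)) (f : Ω → ℝ) : Prop :=
  ∃ (s : Finset (Set Ω)) (c : Set Ω → ℝ), (∀ A ∈ s, A ∈ 𝒜) ∧
    ∀ ω, f ω = ∑ A ∈ s, c A * (A.indicator (fun _ => (1 : ℝ)) ω)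

/-- `I` is the elementary integral of the `𝒜`-simple function `f` with respect to `l`. -/
def SimpleIntegralEq (𝒜 : Set (Set Ω)) (l : Set Ω → ℝ) (f : Ω → ℝ) (I : ℝ) : Prop :=
  ∃ (s : Finset (Set Ω)) (c : Set Ω → ℝ), (∀ A ∈ s, A ∈ 𝒜) ∧
    (∀ ω, f ω = ∑ A ∈ s, c A * (A.indicator (fun _ => (1 : ℝ)) ω)) ∧
    I = ∑ A ∈ s, c A * l A

/-- `f n` converges to `g` in `l`-measure. -/
def ConvInMeasure (𝒜 : Set (Set Ω)) (l : Set Ω → ℝ) (f : ℕ → Ω → ℝ) (g : Ω → ℝ) : Prop :=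
  ∀ c : ℝ, 0 < c →
    Tendsto (fun n => outer 𝒜 l {ω | c < |f n ω - g ω|}) atTop (nhds 0)

/-- The sequence `f` is Cauchy in the `L¹(l)` seminorm. -/
def CauchyL1 (𝒜 : Set (Set Ω)) (l : Set Ω → ℝ) (f : ℕ → Ω → ℝ) : Prop :=
  ∀ ε : ℝ, 0 < ε → ∃ N : ℕ, ∀ m ≥ N, ∀ n ≥ N,
    ∃ I : ℝ, SimpleIntegralEq 𝒜 l (fun ω => |f m ω - f n ω|) I ∧ I < ε

/-- `f` is integrable in the finitely additive (Dunford–Schwartz) sense with integral `I`. -/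
def HasIntegral (𝒜 : Set (Set Ω)) (l : Set Ω → ℝ) (f : Ω → ℝ) (I : ℝ) : Prop :=
  ∃ (g : ℕ → Ω → ℝ) (J : ℕ → ℝ), (∀ n, IsSimple 𝒜 (g n)) ∧
    ConvInMeasure 𝒜 l g f ∧ CauchyL1 𝒜 l g ∧
    (∀ n, SimpleIntegralEq 𝒜 l (g n) (J n)) ∧ Tendsto J atTop (nhds I)

/-- `f ∈ L¹(l)`. -/
def MemL1 (𝒜 : Set (Set Ω)) (l : Set Ω → ℝ) (f : Ω → ℝ) : Prop :=
  ∃ I : ℝ, HasIntegral 𝒜 l f I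

/-- `f` is `l`-measurable: an `l`-limit in measure of `𝒜`-simple functions. -/
def FAMeasurable (𝒜 : Set (Set Ω)) (l : Set Ω → ℝ) (f : Ω → ℝ) : Prop :=
  ∃ g : ℕ → Ω → ℝ, (∀ n, IsSimple 𝒜 (g n)) ∧ ConvInMeasure 𝒜 l g f

/-- `(𝒜, l)` is a finitely additive measure structure on `Ω`. -/
def FAMeasure (𝒜 : Set (Set Ω)) (l : Set Ω → ℝ) : Prop :=
  MeasureTheory.IsSetRing 𝒜 ∧ (∀ A ∈ 𝒜, 0 ≤ l A) ∧ l ∅ = 0 ∧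
    ∀ A ∈ 𝒜, ∀ B ∈ 𝒜, Disjoint A B → l (A ∪ B) = l A + l B

/-- The ring `𝒜(l)` of sets whose inner and outer measures agree and are finite. -/
def AgreeRing (𝒜 : Set (Set Ω)) (l : Set Ω → ℝ) : Set (Set Ω) :=
  {E : Set Ω | outer 𝒜 l E = inner 𝒜 l E ∧ outer 𝒜 l E < ⊤}

end FA

open FA MeasureTheory Filter

namespace FA

variable {Ω : Type*} {𝒜 : Set (Set Ω)} {μ : Set Ω → ℝ}

/-- atoms of a finite family of sets -/
def atomOf (s T : Finset (Set Ω)) : Set Ω := {ω | ∀ A ∈ s, (ω ∈ A ↔ A ∈ T)}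

open Classical in
lemma mem_atomOf_filter (s : Finset (Set Ω)) (ω : Ω) :
    ω ∈ atomOf s (s.filter (fun A => ω ∈ A)) := by
  intro A hA
  simp [hA]

lemma atomOf_pattern_unique {s T T' : Finset (Set Ω)} (hT : T ⊆ s) (hT' : T' ⊆ s)
    {ω : Ω} (h1 : ω ∈ atomOf s T) (h2 : ω ∈ atomOf s T') : T = T' := by
  ext A
  constructor
  · intro hA
    exact (h2 A (hT hA)).mp ((h1 A (hT hA)).mpr hA)
  · intro hA
    exact (h1 A (hT' hA)).mp ((h2 A (hT' hA)).mpr hA)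

lemma atomOf_disjoint {s T T' : Finset (Set Ω)} (hT : T ⊆ s) (hT' : T' ⊆ s)
    (hne : T ≠ T') : Disjoint (atomOf s T) (atomOf s T') := by
  rw [Set.disjoint_left]
  intro ω h1 h2
  exact hne (atomOf_pattern_unique hT hT' h1 h2)

lemma atomOf_mem_ring (hr : IsSetRing 𝒜) {s T : Finset (Set Ω)} (hs : ∀ A ∈ s, A ∈ 𝒜)
    (hT : T ⊆ s) (hne : T.Nonempty) : atomOf s T ∈ 𝒜 := by
  classical
  have heq : atomOf s T = (⋂ A ∈ T, A) \ (⋃ A ∈ s \ T, A) := by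
    ext ω
    simp only [atomOf, Set.mem_setOf_eq, Set.mem_diff, Set.mem_iInter, Set.mem_iUnion,
      Finset.mem_sdiff, not_exists]
    constructor
    · intro H
      refine ⟨fun A hA => (H A (hT hA)).mpr hA, ?_⟩
      intro A hA
      rcases hA with ⟨hAs, hAT⟩
      intro hωA
      exact hAT ((H A hAs).mp hωA)
    · rintro ⟨h1, h2⟩ A hAs
      constructor
      · intro hωA
        by_contra hAT
        exact h2 A ⟨hAs, hAT⟩ hωA
      · intro hAT
        exact h1 A hAT
  rw [heq]
  exact hr.sdiff_mem (hr.biInter_mem T hne fun A hA => hs A (hT hA))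
    (hr.biUnion_mem _ fun A hA => hs A (Finset.mem_sdiff.mp hA).1)

/-- value of a simple sum on an atom -/
lemma sum_rep_on_atom (s : Finset (Set Ω)) (c : Set Ω → ℝ) {T : Finset (Set Ω)} (hT : T ⊆ s)
    {ω : Ω} (hω : ω ∈ atomOf s T) :
    ∑ A ∈ s, c A * (A.indicator (fun _ => (1:ℝ)) ω) = ∑ A ∈ T, c A := by
  classical
  have : ∀ A ∈ s, c A * (A.indicator (fun _ => (1:ℝ)) ω) = if A ∈ T then c A else 0 := by
    intro A hA
    by_cases hmem : A ∈ T
    · rw [if_pos hmem, Set.indicator_of_mem ((hω A hA).mpr hmem), mul_one]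
    · rw [if_neg hmem, Set.indicator_of_notMem (fun hc => hmem ((hω A hA).mp hc)), mul_zero]
  rw [Finset.sum_congr rfl this, Finset.sum_ite_mem, Finset.inter_eq_right.mpr hT]

lemma additive_sum (hμ : FAMeasure 𝒜 μ) {ι : Type*} (t : Finset ι) (f : ι → Set Ω)
    (hf : ∀ i ∈ t, f i ∈ 𝒜) (hdisj : ∀ i ∈ t, ∀ j ∈ t, i ≠ j → Disjoint (f i) (f j)) :
    μ (⋃ i ∈ t, f i) = ∑ i ∈ t, μ (f i) := by
  classical
  induction t using Finset.induction with
  | empty => simpa using hμ.2.2.1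
  | @insert i t hit ih =>
    rw [Finset.sum_insert hit, Finset.set_biUnion_insert]
    have h1 : f i ∈ 𝒜 := hf i (Finset.mem_insert_self i t)
    have h2 : (⋃ j ∈ t, f j) ∈ 𝒜 :=
      hμ.1.biUnion_mem t fun j hj => hf j (Finset.mem_insert_of_mem hj)
    have h3 : Disjoint (f i) (⋃ j ∈ t, f j) := by
      rw [Set.disjoint_iUnion₂_right]
      intro j hj
      exact hdisj i (Finset.mem_insert_self i t) j (Finset.mem_insert_of_mem hj)
        (fun he => hit (he ▸ hj))
    rw [hμ.2.2.2 _ h1 _ h2 h3, ih (fun j hj => hf j (Finset.mem_insert_of_mem hj))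
      (fun a ha b hb hab => hdisj a (Finset.mem_insert_of_mem ha) b
        (Finset.mem_insert_of_mem hb) hab)]

open Classical in
lemma measure_eq_sum_atoms (hμ : FAMeasure 𝒜 μ) {s : Finset (Set Ω)} (hs : ∀ A ∈ s, A ∈ 𝒜)
    {A : Set Ω} (hA : A ∈ s) :
    μ A = ∑ T ∈ s.powerset.filter (fun T => A ∈ T), μ (atomOf s T) := by
  have hdec : A = ⋃ T ∈ s.powerset.filter (fun T => A ∈ T), atomOf s T := by
    ext ω
    simp only [Set.mem_iUnion, Finset.mem_filter, Finset.mem_powerset, exists_prop]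
    constructor
    · intro hω
      exact ⟨s.filter (fun B => ω ∈ B), ⟨Finset.filter_subset _ _,
        Finset.mem_filter.mpr ⟨hA, hω⟩⟩, mem_atomOf_filter s ω⟩
    · rintro ⟨T, ⟨hTs, hAT⟩, hω⟩
      exact (hω A (hTs hAT)).mpr hAT
  calc μ A = μ (⋃ T ∈ s.powerset.filter (fun T => A ∈ T), atomOf s T) := by rw [← hdec]
    _ = ∑ T ∈ s.powerset.filter (fun T => A ∈ T), μ (atomOf s T) := by
        refine additive_sum hμ _ _ ?_ ?_
        · intro T hT
          rcases Finset.mem_filter.mp hT with ⟨hTs, hAT⟩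
          exact atomOf_mem_ring hμ.1 hs (Finset.mem_powerset.mp hTs) ⟨A, hAT⟩
        · intro T hT T' hT' hne
          exact atomOf_disjoint (Finset.mem_powerset.mp (Finset.mem_filter.mp hT).1)
            (Finset.mem_powerset.mp (Finset.mem_filter.mp hT').1) hne

open Classical in
lemma simple_integral_atoms (hμ : FAMeasure 𝒜 μ) {s : Finset (Set Ω)} {c : Set Ω → ℝ}
    (hs : ∀ A ∈ s, A ∈ 𝒜) :
    ∑ A ∈ s, c A * μ A = ∑ T ∈ s.powerset, (∑ A ∈ T, c A) * μ (atomOf s T) := by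
  calc ∑ A ∈ s, c A * μ A
      = ∑ A ∈ s, ∑ T ∈ s.powerset.filter (fun T => A ∈ T), c A * μ (atomOf s T) := by
        refine Finset.sum_congr rfl fun A hA => ?_
        rw [measure_eq_sum_atoms hμ hs hA, Finset.mul_sum]
    _ = ∑ A ∈ s, ∑ T ∈ s.powerset, if A ∈ T then c A * μ (atomOf s T) else 0 := by
        simp [Finset.sum_filter]
    _ = ∑ T ∈ s.powerset, ∑ A ∈ s, if A ∈ T then c A * μ (atomOf s T) else 0 :=
        Finset.sum_comm
    _ = ∑ T ∈ s.powerset, (∑ A ∈ T, c A) * μ (atomOf s T) := by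
        refine Finset.sum_congr rfl fun T hT => ?_
        rw [Finset.sum_ite_mem, Finset.inter_eq_right.mpr (Finset.mem_powerset.mp hT),
          ← Finset.sum_mul]

lemma simpleIntegral_nonneg (hμ : FAMeasure 𝒜 μ) {f : Ω → ℝ} {I : ℝ} (hf : ∀ ω, 0 ≤ f ω)
    (h : SimpleIntegralEq 𝒜 μ f I) : 0 ≤ I := by
  obtain ⟨s, c, hs, hfeq, hIeq⟩ := h
  rw [hIeq, simple_integral_atoms hμ hs]
  refine Finset.sum_nonneg fun T hT => ?_
  rcases T.eq_empty_or_nonempty with rfl | hTne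
  · simp
  rcases Set.eq_empty_or_nonempty (atomOf s T) with he | ⟨ω, hω⟩
  · rw [he, hμ.2.2.1, mul_zero]
  have hTs : T ⊆ s := Finset.mem_powerset.mp hT
  have hval : (∑ A ∈ T, c A) = f ω := by rw [hfeq ω, sum_rep_on_atom s c hTs hω]
  exact mul_nonneg (hval ▸ hf ω) (hμ.2.1 _ (atomOf_mem_ring hμ.1 hs hTs hTne))

end FA


namespace FA

variable {Ω : Type*} {𝒜 : Set (Set Ω)} {μ : Set Ω → ℝ}

lemma simpleIntegralEq_congr {f g : Ω → ℝ} {I : ℝ} (hfg : ∀ ω, f ω = g ω)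
    (h : SimpleIntegralEq 𝒜 μ f I) : SimpleIntegralEq 𝒜 μ g I := by
  obtain ⟨s, c, hs, hfeq, hIeq⟩ := h
  exact ⟨s, c, hs, fun ω => (hfg ω) ▸ hfeq ω, hIeq⟩

lemma simpleIntegralEq_zero : SimpleIntegralEq 𝒜 μ (fun _ => (0:ℝ)) 0 :=
  ⟨∅, fun _ => 0, by simp, by simp, by simp⟩

open Classical in
lemma simpleIntegralEq_extend {f : Ω → ℝ} {I : ℝ} {s u : Finset (Set Ω)} {c : Set Ω → ℝ}
    (hsu : s ⊆ u) (hu : ∀ A ∈ u, A ∈ 𝒜)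
    (hfeq : ∀ ω, f ω = ∑ A ∈ s, c A * (A.indicator (fun _ => (1:ℝ)) ω))
    (hIeq : I = ∑ A ∈ s, c A * μ A) :
    (∀ ω, f ω = ∑ A ∈ u, (if A ∈ s then c A else 0) * (A.indicator (fun _ => (1:ℝ)) ω)) ∧
      I = ∑ A ∈ u, (if A ∈ s then c A else 0) * μ A := by
  have key : ∀ (v : Set Ω → ℝ),
      ∑ A ∈ u, (if A ∈ s then c A else 0) * v A = ∑ A ∈ s, c A * v A := by
    intro v
    rw [← Finset.sum_subset hsu (f := fun A => (if A ∈ s then c A else 0) * v A)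
      (fun A _ hA => by simp [hA])]
    exact Finset.sum_congr rfl fun A hA => by rw [if_pos hA]
  exact ⟨fun ω => by rw [hfeq ω, key], by rw [hIeq, key]⟩

open Classical in
lemma simpleIntegralEq_add {f g : Ω → ℝ} {I J : ℝ}
    (hf : SimpleIntegralEq 𝒜 μ f I) (hg : SimpleIntegralEq 𝒜 μ g J) :
    SimpleIntegralEq 𝒜 μ (fun ω => f ω + g ω) (I + J) := by
  obtain ⟨s, c, hs, hfeq, hIeq⟩ := hf
  obtain ⟨t, d, ht, hgeq, hJeq⟩ := hg
  have hu : ∀ A ∈ s ∪ t, A ∈ 𝒜 := fun A hA => by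
    rcases Finset.mem_union.mp hA with h | h
    · exact hs A h
    · exact ht A h
  obtain ⟨hf1, hf2⟩ := simpleIntegralEq_extend Finset.subset_union_left hu hfeq hIeq
  obtain ⟨hg1, hg2⟩ := simpleIntegralEq_extend Finset.subset_union_right hu hgeq hJeq
  refine ⟨s ∪ t, fun A => (if A ∈ s then c A else 0) + (if A ∈ t then d A else 0), hu, ?_, ?_⟩
  · intro ω
    show f ω + g ω = _
    rw [hf1 ω, hg1 ω, ← Finset.sum_add_distrib]
    exact Finset.sum_congr rfl fun A _ => by dsimp only; ring
  · rw [hf2, hg2, ← Finset.sum_add_distrib]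
    exact Finset.sum_congr rfl fun A _ => by dsimp only; ring

lemma simpleIntegralEq_smul {f : Ω → ℝ} {I : ℝ} (a : ℝ)
    (hf : SimpleIntegralEq 𝒜 μ f I) :
    SimpleIntegralEq 𝒜 μ (fun ω => a * f ω) (a * I) := by
  obtain ⟨s, c, hs, hfeq, hIeq⟩ := hf
  refine ⟨s, fun A => a * c A, hs, ?_, ?_⟩
  · intro ω
    show a * f ω = _
    rw [hfeq ω, Finset.mul_sum]
    exact Finset.sum_congr rfl fun A _ => by dsimp only; ring
  · rw [hIeq, Finset.mul_sum]
    exact Finset.sum_congr rfl fun A _ => by dsimp only; ring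

lemma simpleIntegral_mono (hμ : FAMeasure 𝒜 μ) {f g : Ω → ℝ} {I J : ℝ}
    (hfg : ∀ ω, f ω ≤ g ω)
    (hf : SimpleIntegralEq 𝒜 μ f I) (hg : SimpleIntegralEq 𝒜 μ g J) : I ≤ J := by
  have h1 : SimpleIntegralEq 𝒜 μ (fun ω => g ω + (-1) * f ω) (J + (-1) * I) :=
    simpleIntegralEq_add hg (simpleIntegralEq_smul (-1) hf)
  have h2 : 0 ≤ J + (-1) * I :=
    simpleIntegral_nonneg hμ (fun ω => by have := hfg ω; simp; linarith) h1
  linarith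

lemma simpleIntegral_unique (hμ : FAMeasure 𝒜 μ) {f : Ω → ℝ} {I J : ℝ}
    (hf : SimpleIntegralEq 𝒜 μ f I) (hg : SimpleIntegralEq 𝒜 μ f J) : I = J :=
  le_antisymm (simpleIntegral_mono hμ (fun _ => le_refl _) hf hg)
    (simpleIntegral_mono hμ (fun _ => le_refl _) hg hf)

-- composition of two simple functions by any Φ with Φ 0 0 = 0 is simple, with an integral
open Classical in
lemma simpleIntegralEq_comp₂ (hr : IsSetRing 𝒜) (Φ : ℝ → ℝ → ℝ) (hΦ : Φ 0 0 = 0)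
    {f g : Ω → ℝ} (hf : IsSimple 𝒜 f) (hg : IsSimple 𝒜 g) :
    ∃ I, SimpleIntegralEq 𝒜 μ (fun ω => Φ (f ω) (g ω)) I := by
  obtain ⟨s, c, hs, hfeq⟩ := hf
  obtain ⟨t, d, ht, hgeq⟩ := hg
  set u := s ∪ t with hu_def
  have hu : ∀ A ∈ u, A ∈ 𝒜 := fun A hA => by
    rcases Finset.mem_union.mp hA with h | h
    · exact hs A h
    · exact ht A h
  have hf1 : ∀ ω, f ω = ∑ A ∈ u, (if A ∈ s then c A else 0) * (A.indicator (fun _ => (1:ℝ)) ω) :=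
    (simpleIntegralEq_extend (μ := μ) Finset.subset_union_left hu hfeq rfl).1
  have hg1 : ∀ ω, g ω = ∑ A ∈ u, (if A ∈ t then d A else 0) * (A.indicator (fun _ => (1:ℝ)) ω) :=
    (simpleIntegralEq_extend (μ := μ) Finset.subset_union_right hu hgeq rfl).1
  -- constancy of f and g on atoms of u
  have hconst : ∀ T ⊆ u, ∀ ω ∈ atomOf u T, ∀ ω' ∈ atomOf u T, f ω = f ω' ∧ g ω = g ω' := by
    intro T hT ω hω ω' hω'
    constructor
    · rw [hf1 ω, hf1 ω', sum_rep_on_atom u _ hT hω, sum_rep_on_atom u _ hT hω']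
    · rw [hg1 ω, hg1 ω', sum_rep_on_atom u _ hT hω, sum_rep_on_atom u _ hT hω']
  set 𝒯 := u.powerset.filter (fun T => T ≠ ∅ ∧ (atomOf u T).Nonempty) with h𝒯
  set s' := 𝒯.image (atomOf u) with hs'
  set e : Set Ω → ℝ := fun B => if hB : B.Nonempty then Φ (f hB.some) (g hB.some) else 0 with he
  refine ⟨∑ B ∈ s', e B * μ B, s', e, ?_, ?_, rfl⟩
  · intro B hB
    obtain ⟨T, hT, rfl⟩ := Finset.mem_image.mp hB
    rcases Finset.mem_filter.mp hT with ⟨hTu, hTne, _⟩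
    exact atomOf_mem_ring hr hu (Finset.mem_powerset.mp hTu)
      (Finset.nonempty_iff_ne_empty.mpr hTne)
  · intro ω
    set T₀ := u.filter (fun A => ω ∈ A) with hT₀
    have hωT₀ : ω ∈ atomOf u T₀ := mem_atomOf_filter u ω
    by_cases hT₀ne : T₀ = ∅
    · -- ω in no set of u, both f and g vanish, and ω in no atom of s'
      have hfω : f ω = 0 := by
        rw [hf1 ω]
        refine Finset.sum_eq_zero fun A hA => ?_
        have : ω ∉ A := fun hc => by
          have : A ∈ T₀ := Finset.mem_filter.mpr ⟨hA, hc⟩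
          simp [hT₀ne] at this
        rw [Set.indicator_of_notMem this, mul_zero]
      have hgω : g ω = 0 := by
        rw [hg1 ω]
        refine Finset.sum_eq_zero fun A hA => ?_
        have : ω ∉ A := fun hc => by
          have : A ∈ T₀ := Finset.mem_filter.mpr ⟨hA, hc⟩
          simp [hT₀ne] at this
        rw [Set.indicator_of_notMem this, mul_zero]
      show Φ (f ω) (g ω) = _
      rw [hfω, hgω, hΦ]
      refine (Finset.sum_eq_zero fun B hB => ?_).symm
      obtain ⟨T, hT, rfl⟩ := Finset.mem_image.mp hB
      rcases Finset.mem_filter.mp hT with ⟨hTu, hTne, _⟩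
      have : ω ∉ atomOf u T := by
        intro hc
        exact hTne (atomOf_pattern_unique (Finset.mem_powerset.mp hTu)
          (Finset.filter_subset _ _) hc hωT₀ ▸ hT₀ne)
      rw [Set.indicator_of_notMem this, mul_zero]
    · -- ω lies in the atom of T₀, which belongs to s'
      have hT₀mem : T₀ ∈ 𝒯 := Finset.mem_filter.mpr
        ⟨Finset.mem_powerset.mpr (Finset.filter_subset _ _), hT₀ne, ⟨ω, hωT₀⟩⟩
      have hB₀ : atomOf u T₀ ∈ s' := Finset.mem_image_of_mem _ hT₀mem
      show Φ (f ω) (g ω) = _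
      rw [Finset.sum_eq_single_of_mem (atomOf u T₀) hB₀ ?side]
      case side =>
        intro B hB hBne
        obtain ⟨T, hT, rfl⟩ := Finset.mem_image.mp hB
        rcases Finset.mem_filter.mp hT with ⟨hTu, _, _⟩
        have : ω ∉ atomOf u T := by
          intro hc
          exact hBne (by rw [atomOf_pattern_unique (Finset.mem_powerset.mp hTu)
            (Finset.filter_subset _ _) hc hωT₀])
        rw [Set.indicator_of_notMem this, mul_zero]
      have hne : (atomOf u T₀).Nonempty := ⟨ω, hωT₀⟩
      rw [Set.indicator_of_mem hωT₀, mul_one, he]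
      simp only [hne, dif_pos]
      obtain ⟨hfc, hgc⟩ := hconst T₀ (Finset.filter_subset _ _) ω hωT₀ hne.some hne.some_mem
      rw [hfc, hgc]

lemma isSimple_of_simpleIntegralEq {f : Ω → ℝ} {I : ℝ} (h : SimpleIntegralEq 𝒜 μ f I) :
    IsSimple 𝒜 f := by
  obtain ⟨s, c, hs, hfeq, _⟩ := h
  exact ⟨s, c, hs, hfeq⟩

lemma simpleIntegralEq_indicator {A : Set Ω} (hA : A ∈ 𝒜) (a : ℝ) :
    SimpleIntegralEq 𝒜 μ (fun ω => a * A.indicator (fun _ => (1:ℝ)) ω) (a * μ A) := by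
  classical
  refine ⟨{A}, fun _ => a, fun B hB => (Finset.mem_singleton.mp hB) ▸ hA, ?_, ?_⟩
  · intro ω; simp
  · simp

end FA


namespace FA

variable {Ω : Type*} {𝒜 : Set (Set Ω)} {μ : Set Ω → ℝ}

lemma outer_mono {E F : Set Ω} (h : E ⊆ F) : outer 𝒜 μ E ≤ outer 𝒜 μ F := by
  refine le_iInf fun A => le_iInf fun hA => le_iInf fun hF => ?_
  exact iInf_le_of_le A (iInf_le_of_le hA (iInf_le_of_le (h.trans hF) le_rfl))

lemma outer_le_of_mem {A : Set Ω} (hA : A ∈ 𝒜) {E : Set Ω} (hE : E ⊆ A) :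
    outer 𝒜 μ E ≤ ENNReal.ofReal (μ A) :=
  iInf_le_of_le A (iInf_le_of_le hA (iInf_le_of_le hE le_rfl))

lemma exists_of_outer_lt {E : Set Ω} {c : ℝ≥0∞} (h : outer 𝒜 μ E < c) :
    ∃ A ∈ 𝒜, E ⊆ A ∧ ENNReal.ofReal (μ A) < c := by
  by_contra hc
  push_neg at hc
  have : c ≤ outer 𝒜 μ E :=
    le_iInf fun A => le_iInf fun hA => le_iInf fun hE => hc A hA hE
  exact absurd h (not_lt.mpr this)

lemma outer_empty (hμ : FAMeasure 𝒜 μ) : outer 𝒜 μ (∅ : Set Ω) = 0 := by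
  refine le_antisymm ?_ zero_le
  have := outer_le_of_mem (μ := μ) hμ.1.empty_mem (Set.Subset.refl ∅)
  rwa [hμ.2.2.1, ENNReal.ofReal_zero] at this

lemma mu_nonneg_diff (hμ : FAMeasure 𝒜 μ) {C D : Set Ω} (hC : C ∈ 𝒜) (hD : D ∈ 𝒜)
    (h : C ⊆ D) : μ C ≤ μ D := by
  have hdiff : D \ C ∈ 𝒜 := hμ.1.sdiff_mem hD hC
  have hdisj : Disjoint C (D \ C) := Set.disjoint_sdiff_right
  have hunion : C ∪ (D \ C) = D := Set.union_diff_cancel h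
  have := hμ.2.2.2 C hC (D \ C) hdiff hdisj
  rw [hunion] at this
  have h0 := hμ.2.1 _ hdiff
  linarith

lemma mu_union_le (hμ : FAMeasure 𝒜 μ) {A B : Set Ω} (hA : A ∈ 𝒜) (hB : B ∈ 𝒜) :
    μ (A ∪ B) ≤ μ A + μ B := by
  have hdiff : B \ A ∈ 𝒜 := hμ.1.sdiff_mem hB hA
  have hdisj : Disjoint A (B \ A) := Set.disjoint_sdiff_right
  have hunion : A ∪ (B \ A) = A ∪ B := Set.union_diff_self
  have := hμ.2.2.2 A hA (B \ A) hdiff hdisj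
  rw [hunion] at this
  have h1 := mu_nonneg_diff hμ hdiff hB Set.diff_subset
  linarith

lemma outer_union_le (hμ : FAMeasure 𝒜 μ) (E F : Set Ω) :
    outer 𝒜 μ (E ∪ F) ≤ outer 𝒜 μ E + outer 𝒜 μ F := by
  rcases eq_top_or_lt_top (outer 𝒜 μ E) with hE | hE
  · rw [hE, top_add]; exact le_top
  rcases eq_top_or_lt_top (outer 𝒜 μ F) with hF | hF
  · rw [hF, add_top]; exact le_top
  refine ENNReal.le_of_forall_pos_le_add fun ε hε _ => ?_
  have hη0 : ((ε : ℝ≥0∞) / 2) ≠ 0 := by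
    simp [ENNReal.div_eq_zero_iff, hε.ne']
  obtain ⟨A, hA, hEA, hAlt⟩ := exists_of_outer_lt (ENNReal.lt_add_right hE.ne hη0)
  obtain ⟨B, hB, hFB, hBlt⟩ := exists_of_outer_lt (ENNReal.lt_add_right hF.ne hη0)
  calc outer 𝒜 μ (E ∪ F) ≤ ENNReal.ofReal (μ (A ∪ B)) :=
        outer_le_of_mem (hμ.1.union_mem hA hB) (Set.union_subset_union hEA hFB)
    _ ≤ ENNReal.ofReal (μ A + μ B) :=
        ENNReal.ofReal_le_ofReal (mu_union_le hμ hA hB)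
    _ ≤ ENNReal.ofReal (μ A) + ENNReal.ofReal (μ B) := ENNReal.ofReal_add_le
    _ ≤ (outer 𝒜 μ E + (ε : ℝ≥0∞) / 2) + (outer 𝒜 μ F + (ε : ℝ≥0∞) / 2) :=
        add_le_add hAlt.le hBlt.le
    _ = outer 𝒜 μ E + outer 𝒜 μ F + ((ε : ℝ≥0∞) / 2 + (ε : ℝ≥0∞) / 2) := by ring
    _ = outer 𝒜 μ E + outer 𝒜 μ F + (ε : ℝ≥0∞) := by rw [ENNReal.add_halves]

lemma convInMeasure_of_le {g g' : ℕ → Ω → ℝ} {f f' : Ω → ℝ}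
    (h : ConvInMeasure 𝒜 μ g f)
    (hpt : ∀ n ω, |g' n ω - f' ω| ≤ |g n ω - f ω|) : ConvInMeasure 𝒜 μ g' f' := by
  intro c hc
  refine tendsto_of_tendsto_of_tendsto_of_le_of_le tendsto_const_nhds (h c hc)
    (fun n => zero_le) (fun n => outer_mono fun ω hω => ?_)
  exact lt_of_lt_of_le hω (hpt n ω)

lemma simpleIntegral_abs_sub (hμ : FAMeasure 𝒜 μ) {f g : Ω → ℝ} {I J D : ℝ}
    (hf : SimpleIntegralEq 𝒜 μ f I) (hg : SimpleIntegralEq 𝒜 μ g J)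
    (hD : SimpleIntegralEq 𝒜 μ (fun ω => |f ω - g ω|) D) : |I - J| ≤ D := by
  have h1 : I ≤ J + D := by
    refine simpleIntegral_mono hμ (fun ω => ?_) hf (simpleIntegralEq_add hg hD)
    have := le_abs_self (f ω - g ω)
    linarith
  have h2 : J ≤ I + D := by
    refine simpleIntegral_mono hμ (fun ω => ?_) hg (simpleIntegralEq_add hf hD)
    have := neg_abs_le (f ω - g ω)
    linarith
  rw [abs_sub_le_iff]
  constructor <;> linarith

lemma hasIntegral_of_simple (hμ : FAMeasure 𝒜 μ) {f : Ω → ℝ} {I : ℝ}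
    (h : SimpleIntegralEq 𝒜 μ f I) : HasIntegral 𝒜 μ f I := by
  refine ⟨fun _ => f, fun _ => I, fun _ => isSimple_of_simpleIntegralEq h, ?_, ?_,
    fun _ => h, tendsto_const_nhds⟩
  · intro c hc
    have hset : (fun _ : ℕ => outer 𝒜 μ {ω | c < |f ω - f ω|}) = fun _ : ℕ => 0 := by
      funext n
      have : {ω | c < |f ω - f ω|} = (∅ : Set Ω) := by
        ext ω
        simp only [Set.mem_setOf_eq, sub_self, abs_zero, Set.mem_empty_iff_false, iff_false,
          not_lt]
        exact hc.le
      rw [this, outer_empty hμ]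
    rw [hset]
    exact tendsto_const_nhds
  · intro ε hε
    exact ⟨0, fun m _ n _ =>
      ⟨0, simpleIntegralEq_congr (fun ω => by simp) simpleIntegralEq_zero, hε⟩⟩

lemma hasIntegral_add (hμ : FAMeasure 𝒜 μ) {f g : Ω → ℝ} {I J : ℝ}
    (hf : HasIntegral 𝒜 μ f I) (hg : HasIntegral 𝒜 μ g J) :
    HasIntegral 𝒜 μ (fun ω => f ω + g ω) (I + J) := by
  obtain ⟨a, Ja, ha_simp, ha_conv, ha_cauchy, ha_int, ha_lim⟩ := hf
  obtain ⟨b, Jb, hb_simp, hb_conv, hb_cauchy, hb_int, hb_lim⟩ := hg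
  refine ⟨fun n ω => a n ω + b n ω, fun n => Ja n + Jb n, ?_, ?_, ?_, ?_, ha_lim.add hb_lim⟩
  · exact fun n => isSimple_of_simpleIntegralEq (simpleIntegralEq_add (ha_int n) (hb_int n))
  · intro c hc
    have hsub : ∀ n, {ω | c < |(a n ω + b n ω) - (f ω + g ω)|} ⊆
        {ω | c/2 < |a n ω - f ω|} ∪ {ω | c/2 < |b n ω - g ω|} := by
      intro n ω hω
      simp only [Set.mem_setOf_eq] at hω
      by_contra hno
      simp only [Set.mem_union, Set.mem_setOf_eq, not_or, not_lt] at hno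
      have habs := abs_add_le (a n ω - f ω) (b n ω - g ω)
      have heq : (a n ω - f ω) + (b n ω - g ω) = (a n ω + b n ω) - (f ω + g ω) := by ring
      rw [heq] at habs
      linarith [hno.1, hno.2]
    have h0 : Tendsto (fun n => outer 𝒜 μ {ω | c/2 < |a n ω - f ω|} +
        outer 𝒜 μ {ω | c/2 < |b n ω - g ω|}) atTop (nhds 0) := by
      have := (ha_conv (c/2) (by linarith)).add (hb_conv (c/2) (by linarith))
      simpa using this
    refine tendsto_of_tendsto_of_tendsto_of_le_of_le tendsto_const_nhds h0
      (fun n => zero_le) (fun n => ?_)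
    exact (outer_mono (hsub n)).trans (outer_union_le hμ _ _)
  · intro ε hε
    obtain ⟨N₁, h₁⟩ := ha_cauchy (ε/2) (by linarith)
    obtain ⟨N₂, h₂⟩ := hb_cauchy (ε/2) (by linarith)
    refine ⟨max N₁ N₂, fun m hm n hn => ?_⟩
    obtain ⟨I₁, hI₁, hI₁lt⟩ := h₁ m (le_trans (le_max_left _ _) hm) n (le_trans (le_max_left _ _) hn)
    obtain ⟨I₂, hI₂, hI₂lt⟩ := h₂ m (le_trans (le_max_right _ _) hm) n (le_trans (le_max_right _ _) hn)
    have hsm : IsSimple 𝒜 (fun ω => a m ω + b m ω) :=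
      isSimple_of_simpleIntegralEq (simpleIntegralEq_add (ha_int m) (hb_int m))
    have hsn : IsSimple 𝒜 (fun ω => a n ω + b n ω) :=
      isSimple_of_simpleIntegralEq (simpleIntegralEq_add (ha_int n) (hb_int n))
    obtain ⟨V, hV⟩ := simpleIntegralEq_comp₂ (μ := μ) hμ.1 (fun x y => |x - y|) (by simp) hsm hsn
    refine ⟨V, hV, ?_⟩
    have hle : V ≤ I₁ + I₂ := by
      refine simpleIntegral_mono hμ (fun ω => ?_) hV (simpleIntegralEq_add hI₁ hI₂)
      have habs := abs_add_le (a m ω - a n ω) (b m ω - b n ω)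
      have heq : (a m ω - a n ω) + (b m ω - b n ω) = (a m ω + b m ω) - (a n ω + b n ω) := by
        ring
      rw [heq] at habs
      linarith
    linarith
  · exact fun n => simpleIntegralEq_add (ha_int n) (hb_int n)

lemma hasIntegral_neg (hμ : FAMeasure 𝒜 μ) {f : Ω → ℝ} {I : ℝ}
    (hf : HasIntegral 𝒜 μ f I) : HasIntegral 𝒜 μ (fun ω => -f ω) (-I) := by
  obtain ⟨a, J, hsimp, hconv, hcauchy, hint, hlim⟩ := hf
  refine ⟨fun n ω => -(a n ω), fun n => -(J n), ?_, ?_, ?_, ?_, hlim.neg⟩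
  · intro n
    refine isSimple_of_simpleIntegralEq (simpleIntegralEq_congr (fun ω => ?_)
      (simpleIntegralEq_smul (μ := μ) (-1) (hint n)))
    ring
  · refine convInMeasure_of_le hconv fun n ω => ?_
    have : -(a n ω) - -(f ω) = -(a n ω - f ω) := by ring
    rw [this, abs_neg]
  · intro ε hε
    obtain ⟨N, hN⟩ := hcauchy ε hε
    refine ⟨N, fun m hm n hn => ?_⟩
    obtain ⟨V, hV, hVlt⟩ := hN m hm n hn
    refine ⟨V, simpleIntegralEq_congr (fun ω => ?_) hV, hVlt⟩
    rw [show -(a m ω) - -(a n ω) = -(a m ω - a n ω) by ring, abs_neg]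
  · intro n
    have h1 := simpleIntegralEq_congr (fun ω => show (-1) * a n ω = -(a n ω) by ring)
      (simpleIntegralEq_smul (μ := μ) (-1) (hint n))
    rw [neg_one_mul] at h1
    exact h1

end FA


namespace FA

variable {Ω : Type*} {𝒜 : Set (Set Ω)} {μ : Set Ω → ℝ}

/-- CORE: a nonnegative sequence of simple functions that converges to `0` in measure and
is Cauchy in `L¹` has elementary integrals tending to `0`. -/
lemma core (hμ : FAMeasure 𝒜 μ) {φ : ℕ → Ω → ℝ} {K : ℕ → ℝ}
    (hrep : ∀ n, SimpleIntegralEq 𝒜 μ (φ n) (K n))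
    (hpos : ∀ n ω, 0 ≤ φ n ω)
    (hconv : ConvInMeasure 𝒜 μ φ (fun _ => 0))
    (hcauchy : CauchyL1 𝒜 μ φ) :
    Tendsto K atTop (nhds 0) := by
  classical
  refine Metric.tendsto_atTop.mpr fun ε hε => ?_
  obtain ⟨N, hN⟩ := hcauchy (ε/8) (by linarith)
  obtain ⟨s, c, hs, hfeq, hIeq⟩ := hrep N
  set A := ⋃ B ∈ s, (B : Set Ω) with hA
  have hAmem : A ∈ 𝒜 := hμ.1.biUnion_mem s hs
  set M : ℝ := ∑ B ∈ s, |c B| with hM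
  have hM0 : 0 ≤ M := Finset.sum_nonneg fun B _ => abs_nonneg _
  have hA0 : 0 ≤ μ A := hμ.2.1 _ hAmem
  -- φ N is bounded by M and vanishes off A
  have hbound : ∀ ω, φ N ω ≤ M := by
    intro ω
    rw [hfeq ω, hM]
    refine Finset.sum_le_sum fun B _ => ?_
    by_cases h : ω ∈ B
    · rw [Set.indicator_of_mem h, mul_one]; exact le_abs_self _
    · rw [Set.indicator_of_notMem h, mul_zero]; exact abs_nonneg _
  have hvanish : ∀ ω, ω ∉ A → φ N ω = 0 := by
    intro ω hωA
    rw [hfeq ω]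
    refine Finset.sum_eq_zero fun B hB => ?_
    rw [Set.indicator_of_notMem (fun hc => hωA (Set.mem_biUnion hB hc)), mul_zero]
  set δ : ℝ := ε/(8*(μ A + 1)) with hδ
  have hδ0 : 0 < δ := by
    apply div_pos (by linarith)
    nlinarith
  set η : ℝ≥0∞ := ENNReal.ofReal (ε/(8*(M+1))) with hη
  have hη0 : 0 < η := ENNReal.ofReal_pos.mpr (by apply div_pos (by linarith); nlinarith)
  obtain ⟨N₂, hN₂⟩ := eventually_atTop.mp ((hconv δ hδ0).eventually_lt_const hη0)
  refine ⟨max N N₂, fun n hn => ?_⟩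
  have hnN : n ≥ N := le_trans (le_max_left _ _) hn
  have hnN₂ : n ≥ N₂ := le_trans (le_max_right _ _) hn
  have hK0 : 0 ≤ K n := simpleIntegral_nonneg hμ (hpos n) (hrep n)
  -- Cauchy bound between n and N
  obtain ⟨D, hD, hDlt⟩ := hN n hnN N (le_refl N)
  have hD0 : 0 ≤ D := simpleIntegral_nonneg hμ (fun ω => abs_nonneg _) hD
  -- tail set
  have houter := hN₂ n hnN₂
  obtain ⟨B, hB, hsubB, hBlt⟩ := exists_of_outer_lt houter
  have hBbound : μ B < ε/(8*(M+1)) := by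
    have hq : 0 < ε/(8*(M+1)) := by apply div_pos (by linarith); nlinarith
    exact (ENNReal.ofReal_lt_ofReal_iff hq).mp hBlt
  set B' := A ∩ B with hB'
  have hB'mem : B' ∈ 𝒜 := hμ.1.inter_mem hAmem hB
  have hB'0 : 0 ≤ μ B' := hμ.2.1 _ hB'mem
  have hB'le : μ B' ≤ μ B := mu_nonneg_diff hμ hB'mem hB Set.inter_subset_right
  -- pointwise bound
  have hpt : ∀ ω, φ n ω ≤ 2 * |φ n ω - φ N ω| +
      (δ * A.indicator (fun _ => (1:ℝ)) ω + M * B'.indicator (fun _ => (1:ℝ)) ω) := by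
    intro ω
    have habs : 0 ≤ |φ n ω - φ N ω| := abs_nonneg _
    by_cases hωA : ω ∈ A
    · rw [Set.indicator_of_mem hωA]
      by_cases hle : φ n ω ≤ δ
      · have hind : (0:ℝ) ≤ M * B'.indicator (fun _ => (1:ℝ)) ω :=
          mul_nonneg hM0 (Set.indicator_nonneg (fun _ _ => zero_le_one) ω)
        linarith
      · push_neg at hle
        have hωtail : ω ∈ {ω | δ < |φ n ω - (fun _ => (0:ℝ)) ω|} := by
          simp only [Set.mem_setOf_eq, sub_zero]
          rw [abs_of_nonneg (hpos n ω)]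
          exact hle
        have hωB : ω ∈ B := hsubB hωtail
        have hωB' : ω ∈ B' := ⟨hωA, hωB⟩
        rw [Set.indicator_of_mem hωB', mul_one]
        have h1 : φ n ω ≤ |φ n ω - φ N ω| + φ N ω := by
          have := le_abs_self (φ n ω - φ N ω)
          linarith
        have h2 := hbound ω
        have h3 : 0 ≤ δ * 1 := by positivity
        linarith
    · rw [Set.indicator_of_notMem hωA, mul_zero]
      have h0 := hvanish ω hωA
      have h1 : φ n ω ≤ |φ n ω - φ N ω| := by
        have := le_abs_self (φ n ω - φ N ω)
        linarith
      have hind : (0:ℝ) ≤ M * B'.indicator (fun _ => (1:ℝ)) ω :=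
        mul_nonneg hM0 (Set.indicator_nonneg (fun _ _ => zero_le_one) ω)
      linarith
  -- integrate the pointwise bound
  have hR : SimpleIntegralEq 𝒜 μ
      (fun ω => 2 * |φ n ω - φ N ω| +
        (δ * A.indicator (fun _ => (1:ℝ)) ω + M * B'.indicator (fun _ => (1:ℝ)) ω))
      (2 * D + (δ * μ A + M * μ B')) :=
    simpleIntegralEq_add (simpleIntegralEq_smul 2 hD)
      (simpleIntegralEq_add (simpleIntegralEq_indicator hAmem δ)
        (simpleIntegralEq_indicator hB'mem M))
  have hKle : K n ≤ 2 * D + (δ * μ A + M * μ B') :=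
    simpleIntegral_mono hμ hpt (hrep n) hR
  -- arithmetic
  have e1 : δ * (μ A + 1) = ε/8 := by
    rw [hδ]
    field_simp
  have e2 : δ * μ A ≤ ε/8 := by nlinarith
  have e3 : M * μ B' ≤ ε/8 := by
    have h4 : M * μ B' ≤ M * (ε/(8*(M+1))) := by
      apply mul_le_mul_of_nonneg_left (le_trans hB'le hBbound.le) hM0
    have h5 : M * (ε/(8*(M+1))) ≤ (M+1) * (ε/(8*(M+1))) := by
      apply mul_le_mul_of_nonneg_right (by linarith)
      apply le_of_lt
      apply div_pos (by linarith)
      nlinarith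
    have h6 : (M+1) * (ε/(8*(M+1))) = ε/8 := by
      field_simp
    linarith
  rw [Real.dist_eq, sub_zero, abs_of_nonneg hK0]
  linarith

lemma hasIntegral_nonneg (hμ : FAMeasure 𝒜 μ) {f : Ω → ℝ} {I : ℝ}
    (hpos : ∀ ω, 0 ≤ f ω) (hf : HasIntegral 𝒜 μ f I) : 0 ≤ I := by
  obtain ⟨g, J, hsimp, hconv, hcauchy, hint, hlim⟩ := hf
  have hrepneg : ∀ n, ∃ Kn, SimpleIntegralEq 𝒜 μ (fun ω => max (-(g n ω)) 0) Kn := fun n =>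
    simpleIntegralEq_comp₂ hμ.1 (fun x _ => max (-x) 0) (by simp) (hsimp n) (hsimp n)
  choose K hK using hrepneg
  have hKtend : Tendsto K atTop (nhds 0) := by
    refine core hμ hK (fun n ω => le_max_right _ _) ?_ ?_
    · refine convInMeasure_of_le hconv fun n ω => ?_
      have h1 : max (-(g n ω)) 0 ≤ |g n ω - f ω| := by
        refine max_le ?_ (abs_nonneg _)
        have h3 : -(g n ω) ≤ f ω - g n ω := by have := hpos ω; linarith
        calc -(g n ω) ≤ f ω - g n ω := h3
          _ ≤ |f ω - g n ω| := le_abs_self _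
          _ = |g n ω - f ω| := abs_sub_comm _ _
      have h2 : |max (-(g n ω)) 0 - (fun _ => (0:ℝ)) ω| = max (-(g n ω)) 0 := by
        simp only [sub_zero]
        exact abs_of_nonneg (le_max_right _ _)
      rw [h2]
      exact h1
    · intro ε hε
      obtain ⟨N, hN⟩ := hcauchy ε hε
      refine ⟨N, fun m hm n hn => ?_⟩
      obtain ⟨D, hD, hDlt⟩ := hN m hm n hn
      obtain ⟨V, hV⟩ := simpleIntegralEq_comp₂ (μ := μ) hμ.1
        (fun x y => |max (-x) 0 - max (-y) 0|) (by simp) (hsimp m) (hsimp n)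
      refine ⟨V, hV, lt_of_le_of_lt (simpleIntegral_mono hμ (fun ω => ?_) hV hD) hDlt⟩
      have h := abs_max_sub_max_le_abs (-(g m ω)) (-(g n ω)) (0:ℝ)
      have h2 : |-(g m ω) - -(g n ω)| = |g m ω - g n ω| := by
        rw [show -(g m ω) - -(g n ω) = -(g m ω - g n ω) by ring, abs_neg]
      rw [h2] at h
      exact h
  have hJK : ∀ n, -(K n) ≤ J n := by
    intro n
    have hle := simpleIntegral_mono hμ (f := fun ω => (-1) * max (-(g n ω)) 0) (g := g n)
      (fun ω => by
        show (-1 : ℝ) * max (-(g n ω)) 0 ≤ g n ω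
        have := le_max_left (-(g n ω)) 0
        linarith)
      (simpleIntegralEq_smul (-1) (hK n)) (hint n)
    linarith
  have hnegK : Tendsto (fun n => -(K n)) atTop (nhds 0) := by
    simpa using hKtend.neg
  exact le_of_tendsto_of_tendsto' hnegK hlim hJK

lemma hasIntegral_mono (hμ : FAMeasure 𝒜 μ) {f g : Ω → ℝ} {I J : ℝ}
    (hfg : ∀ ω, f ω ≤ g ω) (hf : HasIntegral 𝒜 μ f I) (hg : HasIntegral 𝒜 μ g J) : I ≤ J := by
  have h1 : HasIntegral 𝒜 μ (fun ω => g ω + -(f ω)) (J + -I) :=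
    hasIntegral_add hμ hg (hasIntegral_neg hμ hf)
  have h2 := hasIntegral_nonneg hμ (fun ω => by
    show (0:ℝ) ≤ g ω + -(f ω)
    have := hfg ω
    linarith) h1
  linarith

end FA


namespace FA

variable {Ω : Type*} {𝒜 : Set (Set Ω)} {μ : Set Ω → ℝ}

lemma abs_min_sub_min_le (a b c : ℝ) : |min a c - min b c| ≤ |a - b| :=
  (abs_min_sub_min_le_max a c b c).trans (by simp)

/-- the pointwise min of an integrable function and a simple function is integrable -/
lemma hasIntegral_min_simple (hμ : FAMeasure 𝒜 μ) {f : Ω → ℝ} {I : ℝ}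
    (hf : HasIntegral 𝒜 μ f I) {σ : Ω → ℝ} (hσ : IsSimple 𝒜 σ) :
    ∃ V, HasIntegral 𝒜 μ (fun ω => min (f ω) (σ ω)) V := by
  obtain ⟨g, J, hsimp, hconv, hcauchy, hint, hlim⟩ := hf
  have hrep : ∀ n, ∃ Vn, SimpleIntegralEq 𝒜 μ (fun ω => min (g n ω) (σ ω)) Vn := fun n =>
    simpleIntegralEq_comp₂ hμ.1 (fun x y => min x y) (by simp) (hsimp n) hσ
  choose V hV using hrep
  have habs : ∀ m n, ∃ W, SimpleIntegralEq 𝒜 μ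
      (fun ω => |min (g m ω) (σ ω) - min (g n ω) (σ ω)|) W := fun m n =>
    simpleIntegralEq_comp₂ hμ.1 (fun x y => |x - y|) (by simp)
      (isSimple_of_simpleIntegralEq (hV m)) (isSimple_of_simpleIntegralEq (hV n))
  have hC : CauchyL1 𝒜 μ (fun n ω => min (g n ω) (σ ω)) := by
    intro ε hε
    obtain ⟨N, hN⟩ := hcauchy ε hε
    refine ⟨N, fun m hm n hn => ?_⟩
    obtain ⟨D, hD, hDlt⟩ := hN m hm n hn
    obtain ⟨W, hW⟩ := habs m n
    refine ⟨W, hW, lt_of_le_of_lt (simpleIntegral_mono hμ (fun ω => ?_) hW hD) hDlt⟩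
    exact abs_min_sub_min_le _ _ _
  have hVc : CauchySeq V := by
    refine Metric.cauchySeq_iff.mpr fun θ hθ => ?_
    obtain ⟨N, hN⟩ := hC θ hθ
    refine ⟨N, fun m hm n hn => ?_⟩
    obtain ⟨W, hW, hWlt⟩ := hN m hm n hn
    rw [Real.dist_eq]
    exact lt_of_le_of_lt (simpleIntegral_abs_sub hμ (hV m) (hV n) hW) hWlt
  obtain ⟨L, hL⟩ := cauchySeq_tendsto_of_complete hVc
  refine ⟨L, fun n ω => min (g n ω) (σ ω), V,
    fun n => isSimple_of_simpleIntegralEq (hV n), ?_, hC, hV, hL⟩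
  refine convInMeasure_of_le hconv fun n ω => ?_
  exact abs_min_sub_min_le _ _ _

/-- an integrable `f` is `L¹`-approximated by simple functions -/
lemma exists_simple_approx (hμ : FAMeasure 𝒜 μ) {f : Ω → ℝ} {I : ℝ}
    (hf : HasIntegral 𝒜 μ f I) {ε : ℝ} (hε : 0 < ε) :
    ∃ (φ : Ω → ℝ) (Iφ D : ℝ), SimpleIntegralEq 𝒜 μ φ Iφ ∧
      HasIntegral 𝒜 μ (fun ω => |f ω - φ ω|) D ∧ D < ε := by
  obtain ⟨g, J, hsimp, hconv, hcauchy, hint, hlim⟩ := hf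
  obtain ⟨N, hN⟩ := hcauchy (ε/2) (by linarith)
  have hψrep : ∀ m, ∃ Dm, SimpleIntegralEq 𝒜 μ (fun ω => |g m ω - g N ω|) Dm := fun m =>
    simpleIntegralEq_comp₂ hμ.1 (fun x y => |x - y|) (by simp) (hsimp m) (hsimp N)
  choose D hD using hψrep
  have habs2 : ∀ m n, ∃ W, SimpleIntegralEq 𝒜 μ
      (fun ω => abs (|g m ω - g N ω| - |g n ω - g N ω|)) W := fun m n =>
    simpleIntegralEq_comp₂ hμ.1 (fun x y => |x - y|) (by simp)
      (isSimple_of_simpleIntegralEq (hD m)) (isSimple_of_simpleIntegralEq (hD n))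
  have hptabs : ∀ m n (ω : Ω), abs (|g m ω - g N ω| - |g n ω - g N ω|) ≤ |g m ω - g n ω| := by
    intro m n ω
    have h := abs_abs_sub_abs_le_abs_sub (g m ω - g N ω) (g n ω - g N ω)
    have heq : (g m ω - g N ω) - (g n ω - g N ω) = g m ω - g n ω := by ring
    rwa [heq] at h
  have hCD : CauchyL1 𝒜 μ (fun m ω => |g m ω - g N ω|) := by
    intro θ hθ
    obtain ⟨N', hN'⟩ := hcauchy θ hθ
    refine ⟨N', fun m hm n hn => ?_⟩
    obtain ⟨W0, hW0, hW0lt⟩ := hN' m hm n hn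
    obtain ⟨W, hW⟩ := habs2 m n
    exact ⟨W, hW, lt_of_le_of_lt
      (simpleIntegral_mono hμ (fun ω => hptabs m n ω) hW hW0) hW0lt⟩
  have hDc : CauchySeq D := by
    refine Metric.cauchySeq_iff.mpr fun θ hθ => ?_
    obtain ⟨N', hN'⟩ := hCD θ hθ
    refine ⟨N', fun m hm n hn => ?_⟩
    obtain ⟨W, hW, hWlt⟩ := hN' m hm n hn
    rw [Real.dist_eq]
    exact lt_of_le_of_lt (simpleIntegral_abs_sub hμ (hD m) (hD n) hW) hWlt
  obtain ⟨Dlim, hDlim⟩ := cauchySeq_tendsto_of_complete hDc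
  have hDbound : ∀ m ≥ N, D m ≤ ε/2 := by
    intro m hm
    obtain ⟨W, hW, hWlt⟩ := hN m hm N (le_refl N)
    rw [simpleIntegral_unique hμ (hD m) hW]
    exact hWlt.le
  have hDlim_le : Dlim ≤ ε/2 :=
    le_of_tendsto hDlim (eventually_atTop.mpr ⟨N, hDbound⟩)
  refine ⟨g N, J N, Dlim, hint N, ⟨fun m ω => |g m ω - g N ω|, D,
    fun m => isSimple_of_simpleIntegralEq (hD m), ?_, hCD, hD, hDlim⟩, by linarith⟩
  refine convInMeasure_of_le hconv fun m ω => ?_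
  have h := abs_abs_sub_abs_le_abs_sub (g m ω - g N ω) (f ω - g N ω)
  have heq : (g m ω - g N ω) - (f ω - g N ω) = g m ω - f ω := by ring
  rwa [heq] at h

end FA


open FA MeasureTheory Filter in
theorem stmt10' {S : Type*} [TopologicalSpace S] {Ω' : Type*}
    (H : Set (S → ℝ))
    (hcont : ∀ f ∈ H, Continuous f)
    (X' : Ω' → S) (hrange : IsClosed (Set.range X'))
    (𝒜 : Set (Set Ω')) (μ : Set Ω' → ℝ) (hμ : FAMeasure 𝒜 μ)
    (htight : ∀ ε : ℝ≥0∞, 0 < ε → ∃ K : Set S, IsCompact K ∧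
      outer 𝒜 μ {ω | X' ω ∉ K} < ε)
    (h : ℕ → S → ℝ) (hH : ∀ n, h n ∈ H)
    (hanti : ∀ s ∈ Set.range X', Antitone (fun n => h n s))
    (hto0 : ∀ s ∈ Set.range X', Tendsto (fun n => h n s) atTop (nhds 0))
    (I : ℕ → ℝ) (hI : ∀ n, HasIntegral 𝒜 μ (fun ω => h n (X' ω)) (I n)) :
    Tendsto I atTop (nhds 0) := by
  classical
  have hpos : ∀ n, ∀ s ∈ Set.range X', 0 ≤ h n s := by
    intro n s hs
    exact le_of_tendsto (hto0 s hs)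
      (eventually_atTop.mpr ⟨n, fun m hm => hanti s hs hm⟩)
  have hIpos : ∀ n, 0 ≤ I n := fun n =>
    hasIntegral_nonneg hμ (fun ω => hpos n (X' ω) ⟨ω, rfl⟩) (hI n)
  refine Metric.tendsto_atTop.mpr fun ε hε => ?_
  -- simple approximation of h 0 ∘ X'
  obtain ⟨φ, Iφ, D, hφrep, hDint, hDlt⟩ :=
    exists_simple_approx hμ (hI 0) (show (0:ℝ) < ε/4 by linarith)
  have hD0 : 0 ≤ D := hasIntegral_nonneg hμ (fun ω => abs_nonneg _) hDint
  obtain ⟨s, c, hsmem, hφeq, _⟩ := hφrep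
  set A := ⋃ B ∈ s, (B : Set Ω') with hA
  have hAmem : A ∈ 𝒜 := hμ.1.biUnion_mem s hsmem
  set M : ℝ := ∑ B ∈ s, |c B| with hM
  have hM0 : 0 ≤ M := Finset.sum_nonneg fun B _ => abs_nonneg _
  have hA0 : 0 ≤ μ A := hμ.2.1 _ hAmem
  have hφbound : ∀ ω, φ ω ≤ M * A.indicator (fun _ => (1:ℝ)) ω := by
    intro ω
    by_cases hωA : ω ∈ A
    · rw [Set.indicator_of_mem hωA, mul_one, hφeq ω, hM]
      refine Finset.sum_le_sum fun B _ => ?_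
      by_cases hb : ω ∈ B
      · rw [Set.indicator_of_mem hb, mul_one]; exact le_abs_self _
      · rw [Set.indicator_of_notMem hb, mul_zero]; exact abs_nonneg _
    · rw [Set.indicator_of_notMem hωA, mul_zero, hφeq ω]
      refine le_of_eq (Finset.sum_eq_zero fun B hB => ?_)
      rw [Set.indicator_of_notMem (fun hc => hωA (Set.mem_biUnion hB hc)), mul_zero]
  -- the truncations min (h n ∘ X') (M·1_A) are integrable
  have hσrep := simpleIntegralEq_indicator (μ := μ) hAmem M
  have hχ : ∀ n, ∃ V, HasIntegral 𝒜 μ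
      (fun ω => min (h n (X' ω)) (M * A.indicator (fun _ => (1:ℝ)) ω)) V := fun n =>
    hasIntegral_min_simple hμ (hI n) (isSimple_of_simpleIntegralEq hσrep)
  choose V hV using hχ
  have hIle : ∀ n, I n ≤ V n + D := by
    intro n
    refine hasIntegral_mono hμ (fun ω => ?_) (hI n) (hasIntegral_add hμ (hV n) hDint)
    show h n (X' ω) ≤ min (h n (X' ω)) (M * A.indicator (fun _ => (1:ℝ)) ω) +
      |h 0 (X' ω) - φ ω|
    rcases le_total (h n (X' ω)) (M * A.indicator (fun _ => (1:ℝ)) ω) with hc | hc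
    · rw [min_eq_left hc]
      linarith [abs_nonneg (h 0 (X' ω) - φ ω)]
    · rw [min_eq_right hc]
      have h1 : h n (X' ω) ≤ h 0 (X' ω) := hanti (X' ω) ⟨ω, rfl⟩ (Nat.zero_le n)
      have h2 : h 0 (X' ω) ≤ φ ω + |h 0 (X' ω) - φ ω| := by
        have := le_abs_self (h 0 (X' ω) - φ ω); linarith
      have h3 := hφbound ω
      linarith
  -- tightness
  set η : ℝ≥0∞ := ENNReal.ofReal (ε/(4*(M+1))) with hη
  have hq : 0 < ε/(4*(M+1)) := by apply div_pos (by linarith); nlinarith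
  have hη0 : 0 < η := ENNReal.ofReal_pos.mpr hq
  obtain ⟨Kc, hKc, houter⟩ := htight η hη0
  obtain ⟨B, hBmem, hsubB, hBlt⟩ := exists_of_outer_lt houter
  have hBbound : μ B < ε/(4*(M+1)) := (ENNReal.ofReal_lt_ofReal_iff hq).mp hBlt
  have hB0 : 0 ≤ μ B := hμ.2.1 _ hBmem
  -- uniform smallness on the compact set Kc ∩ range X' (Dini)
  set K₀ := Kc ∩ Set.range X' with hK₀
  have hK₀c : IsCompact K₀ := hKc.inter_right hrange
  set δ : ℝ := ε/(4*(μ A + 1)) with hδ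
  have hδ0 : 0 < δ := by apply div_pos (by linarith); nlinarith
  have hcover : K₀ ⊆ ⋃ n : ℕ, (h n) ⁻¹' (Set.Iio δ) := by
    intro x hx
    obtain ⟨n, hn⟩ := ((hto0 x hx.2).eventually_lt_const hδ0).exists
    exact Set.mem_iUnion.mpr ⟨n, hn⟩
  obtain ⟨t, ht⟩ := hK₀c.elim_finite_subcover (fun n : ℕ => (h n) ⁻¹' (Set.Iio δ))
    (fun n => (isOpen_Iio).preimage (hcont _ (hH n))) hcover
  set N := t.sup id with hN
  have hNbound : ∀ x ∈ K₀, ∀ n ≥ N, h n x < δ := by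
    intro x hx n hn
    obtain ⟨i, hi, hxi⟩ := Set.mem_iUnion₂.mp (ht hx)
    have h1 : h n x ≤ h i x := hanti x hx.2 (le_trans (Finset.le_sup (f := id) hi) hn)
    have h2 : h i x < δ := hxi
    linarith
  refine ⟨N, fun n hn => ?_⟩
  -- bound the truncation
  have hVle : V n ≤ δ * μ A + M * μ B := by
    refine hasIntegral_mono hμ (fun ω => ?_) (hV n) (hasIntegral_of_simple hμ
      (simpleIntegralEq_add (simpleIntegralEq_indicator hAmem δ)
        (simpleIntegralEq_indicator hBmem M)))
    show min (h n (X' ω)) (M * A.indicator (fun _ => (1:ℝ)) ω) ≤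
      δ * A.indicator (fun _ => (1:ℝ)) ω + M * B.indicator (fun _ => (1:ℝ)) ω
    have hBind : (0:ℝ) ≤ M * B.indicator (fun _ => (1:ℝ)) ω :=
      mul_nonneg hM0 (Set.indicator_nonneg (fun _ _ => zero_le_one) ω)
    have hAind : (0:ℝ) ≤ δ * A.indicator (fun _ => (1:ℝ)) ω :=
      mul_nonneg hδ0.le (Set.indicator_nonneg (fun _ _ => zero_le_one) ω)
    by_cases hK : X' ω ∈ Kc
    · have hx : X' ω ∈ K₀ := ⟨hK, ⟨ω, rfl⟩⟩
      have h1 : h n (X' ω) < δ := hNbound _ hx n hn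
      by_cases hωA : ω ∈ A
      · rw [Set.indicator_of_mem hωA, mul_one]
        have h2 := min_le_left (h n (X' ω)) M
        linarith [mul_one δ]
      · rw [Set.indicator_of_notMem hωA, mul_zero]
        rw [min_eq_right (hpos n (X' ω) ⟨ω, rfl⟩)]
        linarith
    · have hωB : ω ∈ B := hsubB hK
      rw [Set.indicator_of_mem hωB, mul_one]
      have h1 := min_le_right (h n (X' ω)) (M * A.indicator (fun _ => (1:ℝ)) ω)
      have h2 : M * A.indicator (fun _ => (1:ℝ)) ω ≤ M := by
        by_cases hωA : ω ∈ A
        · rw [Set.indicator_of_mem hωA, mul_one]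
        · rw [Set.indicator_of_notMem hωA, mul_zero]; exact hM0
      linarith
  -- arithmetic conclusion
  have e1 : δ * (μ A + 1) = ε/4 := by rw [hδ]; field_simp
  have e2 : δ * μ A ≤ ε/4 := by nlinarith
  have e3 : M * μ B ≤ ε/4 := by
    have h4 : M * μ B ≤ M * (ε/(4*(M+1))) := mul_le_mul_of_nonneg_left hBbound.le hM0
    have h5 : M * (ε/(4*(M+1))) ≤ (M+1) * (ε/(4*(M+1))) :=
      mul_le_mul_of_nonneg_right (by linarith) hq.le
    have h6 : (M+1) * (ε/(4*(M+1))) = ε/4 := by field_simp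
    linarith
  rw [Real.dist_eq, sub_zero, abs_of_nonneg (hIpos n)]
  have := hIle n
  have := hVle
  linarith


/-- with `X'` having closed range, `μ`-tight, and `(h_n)` a sequence in a
Stonean vector sublattice of continuous functions decreasing pointwise to `0` on the
range of `X'`, the integrals `∫ h_n(X') dμ` tend to `0`. -/
theorem stmt10 {S : Type*} [TopologicalSpace S] {Ω' : Type*}
    (H : Set (S → ℝ))
    (hcont : ∀ f ∈ H, Continuous f)
    (hadd : ∀ f ∈ H, ∀ g ∈ H, f + g ∈ H)
    (hsmul : ∀ (c : ℝ), ∀ f ∈ H, c • f ∈ H)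
    (hsup : ∀ f ∈ H, ∀ g ∈ H, (fun s => max (f s) (g s)) ∈ H)
    (hstone : ∀ f ∈ H, (fun s => min (f s) 1) ∈ H)
    (X' : Ω' → S) (hrange : IsClosed (Set.range X'))
    (𝒜 : Set (Set Ω')) (μ : Set Ω' → ℝ) (hμ : FAMeasure 𝒜 μ)
    (htight : ∀ ε : ℝ≥0∞, 0 < ε → ∃ K : Set S, IsCompact K ∧
      outer 𝒜 μ {ω | X' ω ∉ K} < ε)
    (h : ℕ → S → ℝ) (hH : ∀ n, h n ∈ H)
    (hanti : ∀ s ∈ Set.range X', Antitone (fun n => h n s))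
    (hto0 : ∀ s ∈ Set.range X', Tendsto (fun n => h n s) atTop (nhds 0))
    (I : ℕ → ℝ) (hI : ∀ n, HasIntegral 𝒜 μ (fun ω => h n (X' ω)) (I n)) :
    Tendsto I atTop (nhds 0) := by
  exact stmt10' H hcont X' hrange 𝒜 μ hμ htight h hH hanti hto0 I hI
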